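/- Let n ≥ 2 and n₀ = ⌊n/2⌋ + 1. There exists a constant C_n such that for all real r ≥ n₀, (Γ((r+n)/2)/Γ((r+1)/2)) · (Γ((r-n₀+1)/2)/Γ((r-n₀+n)/2)) ≤ C_n. -/

import Mathlib

open Real

lemma gamma_half_upper (x : ℝ) (hx : 0 < x) :
    Real.Gamma (x + 1/2) ≤ Real.Gamma x * Real.sqrt x := by
  have h := Real.Gamma_mul_add_mul_le_rpow_Gamma_mul_rpow_Gamma hx
    (by linarith : (0:ℝ) < x + 1) one_half_pos one_half_pos (by norm_num)
  have hG : 0 < Real.Gamma x := Real.Gamma_pos_of_pos hx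
  have e1 : (1/2 : ℝ) * x + 1/2 * (x + 1) = x + 1/2 := by ring
  rw [e1, Real.Gamma_add_one hx.ne'] at h
  calc Real.Gamma (x + 1/2) ≤ Real.Gamma x ^ (1/2:ℝ) * (x * Real.Gamma x) ^ (1/2:ℝ) := h
    _ = Real.Gamma x * Real.sqrt x := by
        rw [Real.mul_rpow hx.le hG.le, Real.sqrt_eq_rpow]
        rw [show Real.Gamma x ^ (1/2:ℝ) * (x ^ (1/2:ℝ) * Real.Gamma x ^ (1/2:ℝ))
          = Real.Gamma x ^ (1/2:ℝ) * Real.Gamma x ^ (1/2:ℝ) * x ^ (1/2:ℝ) by ring,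
          ← Real.rpow_add hG]
        norm_num

lemma gamma_half_lower (x : ℝ) (hx : 0 < x) :
    x * Real.Gamma x ≤ Real.Gamma (x + 1/2) * Real.sqrt (x + 1/2) := by
  have hx2 : (0:ℝ) < x + 1/2 := by linarith
  have h := Real.Gamma_mul_add_mul_le_rpow_Gamma_mul_rpow_Gamma hx2
    (by linarith : (0:ℝ) < x + 1/2 + 1) one_half_pos one_half_pos (by norm_num)
  have hG : 0 < Real.Gamma (x + 1/2) := Real.Gamma_pos_of_pos hx2
  have e1 : (1/2 : ℝ) * (x + 1/2) + 1/2 * (x + 1/2 + 1) = x + 1 := by ring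
  rw [e1, Real.Gamma_add_one hx2.ne'] at h
  have e2 : x + 1 = x + 1 := rfl
  calc x * Real.Gamma x = Real.Gamma (x + 1) := (Real.Gamma_add_one hx.ne').symm
    _ ≤ Real.Gamma (x+1/2) ^ (1/2:ℝ) * ((x+1/2) * Real.Gamma (x+1/2)) ^ (1/2:ℝ) := h
    _ = Real.Gamma (x + 1/2) * Real.sqrt (x + 1/2) := by
        rw [Real.mul_rpow hx2.le hG.le, Real.sqrt_eq_rpow]
        rw [show Real.Gamma (x+1/2) ^ (1/2:ℝ) * ((x+1/2) ^ (1/2:ℝ) * Real.Gamma (x+1/2) ^ (1/2:ℝ))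
          = Real.Gamma (x+1/2) ^ (1/2:ℝ) * Real.Gamma (x+1/2) ^ (1/2:ℝ) * (x+1/2) ^ (1/2:ℝ) by ring,
          ← Real.rpow_add hG]
        norm_num

lemma key (K : ℝ) (hK : 1 ≤ K) : ∀ k : ℕ, ∃ C : ℝ, ∀ x y : ℝ,
    1/2 ≤ y → y ≤ x → x ≤ K * y →
    Real.Gamma (x + k/2) / Real.Gamma x * (Real.Gamma y / Real.Gamma (y + k/2)) ≤ C := by
  intro k
  induction k using Nat.strong_induction_on with
  | _ k ih =>
    match k with
    | 0 =>
      refine ⟨1, fun x y hy hyx hxK => ?_⟩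
      norm_num
      have hx : 0 < x := by linarith
      have hy' : (0:ℝ) < y := by linarith
      rw [div_self (Real.Gamma_pos_of_pos hx).ne', div_self (Real.Gamma_pos_of_pos hy').ne', mul_one]
    | 1 =>
      refine ⟨2 * K, fun x y hy hyx hxK => ?_⟩
      have hy' : (0:ℝ) < y := by linarith
      have hx : 0 < x := by linarith
      have hGx : 0 < Real.Gamma x := Real.Gamma_pos_of_pos hx
      have hGy : 0 < Real.Gamma y := Real.Gamma_pos_of_pos hy'
      have hGy2 : 0 < Real.Gamma (y + 1/2) := Real.Gamma_pos_of_pos (by linarith)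
      have h1 := gamma_half_upper x hx
      have h2 := gamma_half_lower y hy'
      have hnum : Real.Gamma (x + 1/2) * Real.Gamma y ≤
          Real.Gamma x * Real.Gamma y * Real.sqrt x := by
        calc Real.Gamma (x + 1/2) * Real.Gamma y ≤ Real.Gamma x * Real.sqrt x * Real.Gamma y :=
              mul_le_mul_of_nonneg_right h1 hGy.le
          _ = Real.Gamma x * Real.Gamma y * Real.sqrt x := by ring
      -- Gamma y ≤ Gamma (y+1/2) * sqrt(y+1/2) / y
      have hsq : Real.sqrt x * Real.sqrt (y + 1/2) ≤ 2 * K * y := by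
        have h3 : Real.sqrt x ≤ Real.sqrt (K * y) := Real.sqrt_le_sqrt hxK
        have h4 : Real.sqrt (y + 1/2) ≤ Real.sqrt (2 * y) := Real.sqrt_le_sqrt (by linarith)
        calc Real.sqrt x * Real.sqrt (y + 1/2) ≤ Real.sqrt (K * y) * Real.sqrt (2 * y) := by
              apply mul_le_mul h3 h4 (Real.sqrt_nonneg _) (Real.sqrt_nonneg _)
          _ = Real.sqrt (K * y * (2 * y)) := (Real.sqrt_mul (by positivity) _).symm
          _ = Real.sqrt (2 * K * y ^ 2) := by ring_nf
          _ ≤ 2 * K * y := by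
              rw [show 2 * K * y ^ 2 = (2 * K) * y ^ 2 by ring, Real.sqrt_mul (by positivity),
                Real.sqrt_sq hy'.le]
              have : Real.sqrt (2 * K) ≤ 2 * K := by
                nlinarith [Real.sq_sqrt (by positivity : (0:ℝ) ≤ 2 * K),
                  Real.sqrt_nonneg (2 * K), hK]
              nlinarith [Real.sqrt_nonneg (2 * K)]
      rw [div_mul_div_comm, div_le_iff₀ (by positivity)]
      push_cast
      calc Real.Gamma (x + 1/2) * Real.Gamma y
          ≤ Real.Gamma x * Real.Gamma y * Real.sqrt x := hnum
        _ ≤ Real.Gamma x * (Real.Gamma (y + 1/2) * Real.sqrt (y + 1/2) / y) * Real.sqrt x := by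
            apply mul_le_mul_of_nonneg_right _ (Real.sqrt_nonneg x)
            apply mul_le_mul_of_nonneg_left _ hGx.le
            rw [le_div_iff₀ hy']
            linarith [h2]
        _ = Real.Gamma x * Real.Gamma (y + 1/2) * (Real.sqrt x * Real.sqrt (y + 1/2) / y) := by
            ring
        _ ≤ Real.Gamma x * Real.Gamma (y + 1/2) * (2 * K) := by
            apply mul_le_mul_of_nonneg_left _ (by positivity)
            rw [div_le_iff₀ hy']
            nlinarith [hsq]
        _ = 2 * K * (Real.Gamma x * Real.Gamma (y + 1/2)) := by ring
    | (m + 2) =>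
      obtain ⟨C, hC⟩ := ih m (by omega)
      refine ⟨K * max C 0, fun x y hy hyx hxK => ?_⟩
      have hy' : (0:ℝ) < y := by linarith
      have hx : 0 < x := by linarith
      have hGx : 0 < Real.Gamma x := Real.Gamma_pos_of_pos hx
      have hGy : 0 < Real.Gamma y := Real.Gamma_pos_of_pos hy'
      have hxm : (0:ℝ) < x + m/2 := by positivity
      have hym : (0:ℝ) < y + m/2 := by positivity
      have e1 : x + (↑(m+2))/2 = (x + m/2) + 1 := by push_cast; ring
      have e2 : y + (↑(m+2))/2 = (y + m/2) + 1 := by push_cast; ring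
      rw [e1, e2, Real.Gamma_add_one hxm.ne', Real.Gamma_add_one hym.ne']
      have hGxm : 0 < Real.Gamma (x + m/2) := Real.Gamma_pos_of_pos hxm
      have hGym : 0 < Real.Gamma (y + m/2) := Real.Gamma_pos_of_pos hym
      have hrec := hC x y hy hyx hxK
      have hfrac : (x + m/2) / (y + m/2) ≤ K := by
        rw [div_le_iff₀ hym]
        have : (m:ℝ)/2 ≤ K * (m/2) := by
          nlinarith [Nat.cast_nonneg (α := ℝ) m]
        nlinarith
      have hnn : 0 ≤ Real.Gamma (x + m/2) / Real.Gamma x * (Real.Gamma y / Real.Gamma (y + m/2)) := by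
        positivity
      calc (x + m/2) * Real.Gamma (x + m/2) / Real.Gamma x *
            (Real.Gamma y / ((y + m/2) * Real.Gamma (y + m/2)))
          = (x + m/2) / (y + m/2) *
            (Real.Gamma (x + m/2) / Real.Gamma x * (Real.Gamma y / Real.Gamma (y + m/2))) := by
            field_simp
        _ ≤ K * max C 0 := by
            apply mul_le_mul hfrac (le_trans hrec (le_max_left _ _)) hnn (by linarith)

theorem stmt_7 (n : ℕ) (hn : 2 ≤ n) :
    ∃ C : ℝ, ∀ r : ℝ, (n / 2 + 1 : ℕ) ≤ r →
      Real.Gamma ((r + n) / 2) / Real.Gamma ((r + 1) / 2) *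
        (Real.Gamma ((r - (n / 2 + 1 : ℕ) + 1) / 2) /
          Real.Gamma ((r - (n / 2 + 1 : ℕ) + n) / 2)) ≤ C := by
  set n₀ : ℕ := n / 2 + 1 with hn₀
  obtain ⟨C, hC⟩ := key ((n₀ : ℝ) + 1) (by linarith [Nat.cast_nonneg (α := ℝ) n₀]) (n - 1)
  refine ⟨C, fun r hr => ?_⟩
  set x : ℝ := (r + 1) / 2 with hx
  set y : ℝ := (r - n₀ + 1) / 2 with hyd
  have hn₀r : (n₀ : ℝ) ≤ r := hr
  have hcast : ((n - 1 : ℕ) : ℝ) = (n : ℝ) - 1 := by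
    have : 1 ≤ n := by omega
    push_cast [this]; ring
  have e1 : (r + n) / 2 = x + ((n - 1 : ℕ) : ℝ) / 2 := by rw [hcast, hx]; ring
  have e2 : (r - n₀ + n) / 2 = y + ((n - 1 : ℕ) : ℝ) / 2 := by rw [hcast, hyd]; ring
  have e3 : (r - n₀ + 1) / 2 = y := rfl
  have hy : 1/2 ≤ y := by rw [hyd]; linarith
  have hyx : y ≤ x := by
    rw [hyd, hx]
    have : (0:ℝ) ≤ n₀ := Nat.cast_nonneg _
    linarith
  have hxK : x ≤ ((n₀ : ℝ) + 1) * y := by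
    rw [hx, hyd]
    have h0 : (0:ℝ) ≤ (n₀ : ℝ) := Nat.cast_nonneg _
    nlinarith [hn₀r]
  have := hC x y hy hyx hxK
  rw [e1, e2]
  exact this
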